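/- Let 𝓛 ∈ ℝ^{N×N} be symmetric positive semidefinite with kernel exactly the span of the all-ones vector 1_N (e.g., the Laplacian of a connected undirected graph). For each i ∈ {1,…,N}, let W_i ∈ ℝ^{n×w_i} be a matrix with orthonormal columns (W_iᵀ W_i = I_{w_i}), and let W = diag(W₁,…,W_N) ∈ ℝ^{nN×(w₁+⋯+w_N)} be the block-diagonal matrix. If the column spaces satisfy ⋂_{i=1}^N Im W_i = {0}, then the matrix Q := Wᵀ (𝓛 ⊗ Iₙ) W is symmetric positive definite. -/

import Mathlib

open Matrix Kronecker

/-- The block-diagonal matrix `diag(W₁,…,W_N)` whose `i`-th diagonal block is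
`Wb i ∈ ℝ^{n×(w i)}`, with rows indexed by `Fin N × Fin n` (to match the Kronecker
product `𝓛 ⊗ Iₙ`) and columns indexed by `Σ i, Fin (w i)`. -/
def blockDiagW {N n : ℕ} {w : Fin N → ℕ} (Wb : (i : Fin N) → Matrix (Fin n) (Fin (w i)) ℝ) :
    Matrix (Fin N × Fin n) ((i : Fin N) × Fin (w i)) ℝ :=
  Matrix.of fun p q => if p.1 = q.1 then Wb q.1 p.2 q.2 else 0

lemma blockDiagW_mulVec {N n : ℕ} {w : Fin N → ℕ}
    (Wb : (i : Fin N) → Matrix (Fin n) (Fin (w i)) ℝ)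
    (x : ((i : Fin N) × Fin (w i)) → ℝ) (i : Fin N) (j : Fin n) :
    (blockDiagW Wb).mulVec x (i, j) = (Wb i).mulVec (fun q => x ⟨i, q⟩) j := by
  classical
  simp only [blockDiagW, Matrix.mulVec, dotProduct, Matrix.of_apply]
  rw [← Finset.univ_sigma_univ, Finset.sum_sigma]
  rw [Finset.sum_eq_single i]
  · simp
  · intro k _ hk
    simp [Ne.symm hk]
  · simp

lemma kron_mulVec {N n : ℕ} (L : Matrix (Fin N) (Fin N) ℝ)
    (y : Fin N × Fin n → ℝ) (i : Fin N) (j : Fin n) :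
    ((L ⊗ₖ (1 : Matrix (Fin n) (Fin n) ℝ)) *ᵥ y) (i, j)
      = L.mulVec (fun k => y (k, j)) i := by
  classical
  simp only [Matrix.mulVec, dotProduct, kroneckerMap_apply, Matrix.one_apply]
  rw [← Finset.univ_product_univ, Finset.sum_product]
  congr 1
  ext k
  simp [mul_ite, mul_comm]

lemma kron_quadform {N n : ℕ} (L : Matrix (Fin N) (Fin N) ℝ)
    (y : Fin N × Fin n → ℝ) :
    y ⬝ᵥ ((L ⊗ₖ (1 : Matrix (Fin n) (Fin n) ℝ)) *ᵥ y)
      = ∑ j : Fin n, (fun k => y (k, j)) ⬝ᵥ L *ᵥ (fun k => y (k, j)) := by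
  classical
  simp only [dotProduct]
  rw [← Finset.univ_product_univ, Finset.sum_product, Finset.sum_comm]
  congr 1; ext j; congr 1; ext i
  rw [kron_mulVec]

/-- Let `𝓛` be symmetric positive semidefinite with kernel exactly the
span of the all-ones vector (e.g. the Laplacian of a connected graph), let each `W_i`
have orthonormal columns, and let `W = diag(W₁,…,W_N)`. If `⋂ᵢ Im W_i = {0}`, then
`Q = Wᵀ (𝓛 ⊗ Iₙ) W` is symmetric positive definite. -/
theorem Q_posDef_of_joint_condition (N n : ℕ) (w : Fin N → ℕ)
    (L : Matrix (Fin N) (Fin N) ℝ)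
    (hL : L.PosSemidef)
    (hker : ∀ x : Fin N → ℝ, L.mulVec x = 0 ↔ ∃ c : ℝ, x = fun _ => c)
    (Wb : (i : Fin N) → Matrix (Fin n) (Fin (w i)) ℝ)
    (hortho : ∀ i, (Wb i)ᵀ * Wb i = 1)
    (hjoint : (⨅ i, LinearMap.range (Wb i).mulVecLin) = ⊥) :
    ((blockDiagW Wb)ᵀ * (L ⊗ₖ (1 : Matrix (Fin n) (Fin n) ℝ)) * blockDiagW Wb).PosDef := by
  classical
  set W := blockDiagW Wb with hW
  set M := L ⊗ₖ (1 : Matrix (Fin n) (Fin n) ℝ) with hM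
  have hMherm : M.IsHermitian := by
    rw [hM, Matrix.IsHermitian]
    ext ⟨i, j⟩ ⟨k, l⟩
    have hsym : L k i = L i k := by simpa using hL.1.apply i k
    simp only [Matrix.conjTranspose_apply, kroneckerMap_apply, Matrix.one_apply, star_trivial]
    by_cases hjl : j = l <;> simp [hjl, eq_comm, hsym]
  rw [Matrix.posDef_iff_dotProduct_mulVec]
  constructor
  · exact Matrix.isHermitian_conjTranspose_mul_mul W hMherm
  · intro x hx
    have key : ∀ z : ((i : Fin N) × Fin (w i)) → ℝ,
        star z ⬝ᵥ (Wᵀ * M * W) *ᵥ z = (W *ᵥ z) ⬝ᵥ M *ᵥ (W *ᵥ z) := by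
      intro z
      rw [Matrix.mul_assoc, ← Matrix.mulVec_mulVec, ← Matrix.mulVec_mulVec,
        Matrix.dotProduct_mulVec, Matrix.vecMul_transpose]
      simp
    rw [key]
    set y := W *ᵥ x with hy
    have hquad : y ⬝ᵥ M *ᵥ y
        = ∑ j : Fin n, (fun k => y (k, j)) ⬝ᵥ L *ᵥ (fun k => y (k, j)) :=
      kron_quadform L y
    have hterm : ∀ j : Fin n, 0 ≤ (fun k => y (k, j)) ⬝ᵥ L *ᵥ (fun k => y (k, j)) := by
      intro j
      simpa using hL.dotProduct_mulVec_nonneg (fun k => y (k, j))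
    have hnonneg : 0 ≤ y ⬝ᵥ M *ᵥ y := by
      rw [hquad]; exact Finset.sum_nonneg fun j _ => hterm j
    rcases lt_or_eq_of_le hnonneg with h | h
    · exact h
    exfalso
    -- each term is zero
    have hzero : ∀ j : Fin n, (fun k => y (k, j)) ⬝ᵥ L *ᵥ (fun k => y (k, j)) = 0 := by
      have := (Finset.sum_eq_zero_iff_of_nonneg (fun j _ => hterm j)).mp (by rw [← hquad, ← h])
      intro j; exact this j (Finset.mem_univ j)
    have hLz : ∀ j : Fin n, L *ᵥ (fun k => y (k, j)) = 0 := by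
      intro j
      have := (hL.dotProduct_mulVec_zero_iff (fun k => y (k, j))).mp (by simpa using hzero j)
      exact this
    -- constant across i
    have hconst : ∀ j : Fin n, ∃ c : ℝ, (fun k => y (k, j)) = fun _ => c := by
      intro j; exact (hker _).mp (hLz j)
    choose c hc using hconst
    -- v ∈ range of each Wb i
    have hv : ∀ i : Fin N, c ∈ LinearMap.range (Wb i).mulVecLin := by
      intro i
      refine ⟨fun q => x ⟨i, q⟩, ?_⟩
      ext j
      have : y (i, j) = (Wb i).mulVec (fun q => x ⟨i, q⟩) j := blockDiagW_mulVec Wb x i j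
      rw [Matrix.mulVecLin_apply, ← this]
      exact (congrFun (hc j) i).symm ▸ (congrFun (hc j) i)
    have hc0 : c = 0 := by
      have : c ∈ (⨅ i, LinearMap.range (Wb i).mulVecLin) := by
        rw [Submodule.mem_iInf]; exact hv
      rw [hjoint] at this
      simpa using this
    -- so y = 0
    have hy0 : ∀ i j, y (i, j) = 0 := by
      intro i j
      have := congrFun (hc j) i
      rw [this, hc0]; rfl
    -- hence each x block = 0
    have hxib : ∀ i : Fin N, (Wb i).mulVec (fun q => x ⟨i, q⟩) = 0 := by
      intro i; ext j
      rw [← blockDiagW_mulVec Wb x i j]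
      exact hy0 i j
    apply hx
    ext ⟨i, q⟩
    have : (fun q => x ⟨i, q⟩) = ((Wb i)ᵀ * Wb i) *ᵥ (fun q => x ⟨i, q⟩) := by
      rw [hortho i, Matrix.one_mulVec]
    have h2 : ((Wb i)ᵀ * Wb i) *ᵥ (fun q => x ⟨i, q⟩) = 0 := by
      rw [← Matrix.mulVec_mulVec, hxib i, Matrix.mulVec_zero]
    have := this.trans h2
    exact congrFun this q
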